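/- Let g, h ∈ ℂ^N. The collections {T_i g : 1 ≤ i ≤ N} and {T_i h : 1 ≤ i ≤ N} are dual frames for ℂ^N, i.e. ⟨f, f₁⟩ = Σ_{i=1}^N ⟨f, T_i g⟩ · ⟨T_i h, f₁⟩ for all f, f₁ ∈ ℂ^N, if and only if conj(ĝ(l)) · ĥ(l) = 1/N for all 1 ≤ l ≤ N. -/

import Mathlib

open scoped ComplexConjugate BigOperators

/-- Graph Fourier transform: `(gft χ f) l = ⟨f, χ_l⟩ = ∑ n, f n * conj (χ l n)`. -/
noncomputable def gft {N : ℕ} (χ : Fin N → EuclideanSpace ℂ (Fin N))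
    (f : EuclideanSpace ℂ (Fin N)) : EuclideanSpace ℂ (Fin N) :=
  WithLp.toLp 2 (fun l => ∑ n, f n * conj (χ l n))

/-- Generalized translation: `(T_i f)(n) = √N · ∑ l, f̂(l) · conj (χ l i) · χ l n`. -/
noncomputable def gtrans {N : ℕ} (χ : Fin N → EuclideanSpace ℂ (Fin N))
    (i : Fin N) (f : EuclideanSpace ℂ (Fin N)) : EuclideanSpace ℂ (Fin N) :=
  WithLp.toLp 2 (fun n => (Real.sqrt N : ℂ) * ∑ l, gft χ f l * conj (χ l i) * χ l n)

section aux
variable {N : ℕ} (χ : Fin N → EuclideanSpace ℂ (Fin N))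

lemma ortho1 (hχ : Orthonormal ℂ χ) (l m : Fin N) :
    ∑ n, conj (χ l n) * χ m n = if l = m then 1 else 0 := by
  have := orthonormal_iff_ite.mp hχ l m
  simpa [PiLp.inner_apply, RCLike.inner_apply, mul_comm] using this

lemma ortho2 (hχ : Orthonormal ℂ χ) (l m : Fin N) :
    ∑ n, χ l n * conj (χ m n) = if l = m then 1 else 0 := by
  have := ortho1 χ hχ m l
  rw [show (if l = m then (1:ℂ) else 0) = if m = l then 1 else 0 by simp [eq_comm], ← this]
  exact Finset.sum_congr rfl fun n _ => mul_comm _ _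

lemma complete (hχ : Orthonormal ℂ χ) (n m : Fin N) :
    ∑ l, conj (χ l n) * χ l m = if n = m then 1 else 0 := by
  classical
  let A : Matrix (Fin N) (Fin N) ℂ := Matrix.of fun l k => χ l k
  have hA : A * A.conjTranspose = 1 := by
    ext l m
    simpa [Matrix.mul_apply, Matrix.conjTranspose_apply, Matrix.one_apply, A,
      RCLike.star_def] using ortho2 χ hχ l m
  have hB : A.conjTranspose * A = 1 := mul_eq_one_comm.mp hA
  have := congrFun (congrFun hB n) m
  simpa [Matrix.mul_apply, Matrix.conjTranspose_apply, Matrix.one_apply, A,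
    RCLike.star_def] using this

lemma parseval (hχ : Orthonormal ℂ χ) (f f₁ : EuclideanSpace ℂ (Fin N)) :
    ∑ n, f n * conj (f₁ n) = ∑ m, gft χ f m * conj (gft χ f₁ m) := by
  have key : ∀ m, gft χ f m * conj (gft χ f₁ m)
      = ∑ n, ∑ k, f n * conj (f₁ k) * (conj (χ m n) * χ m k) := by
    intro m
    simp only [gft, PiLp.toLp_apply, map_sum, map_mul, RingHomCompTriple.comp_apply, Complex.conj_conj,
      RingHom.id_apply]
    rw [Finset.sum_mul_sum]
    exact Finset.sum_congr rfl fun n _ => Finset.sum_congr rfl fun k _ => by ring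
  rw [Finset.sum_congr rfl fun m _ => key m, Finset.sum_comm]
  apply Finset.sum_congr rfl
  intro n _
  rw [Finset.sum_comm]
  have step : ∀ k, (∑ m, f n * conj (f₁ k) * (conj (χ m n) * χ m k))
      = f n * conj (f₁ k) * (if n = k then 1 else 0) := fun k => by
    rw [← Finset.mul_sum, complete χ hχ n k]
  rw [Finset.sum_congr rfl fun k _ => step k]
  simp

lemma framesum (hχ : Orthonormal ℂ χ) (g h f f₁ : EuclideanSpace ℂ (Fin N)) :
    ∑ i : Fin N,
        (∑ n, f n * conj (gtrans χ i g n)) * (∑ n, gtrans χ i h n * conj (f₁ n))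
      = (N : ℂ) *
          ∑ m, conj (gft χ g m) * gft χ h m * (gft χ f m * conj (gft χ f₁ m)) := by
  have hsq : (Real.sqrt N : ℂ) * (Real.sqrt N : ℂ) = (N : ℂ) := by
    rw [← Complex.ofReal_mul, Real.mul_self_sqrt (by positivity)]
    norm_cast
  have ha : ∀ i, (∑ n, f n * conj (gtrans χ i g n))
      = (Real.sqrt N : ℂ) * ∑ m, conj (gft χ g m) * χ m i * gft χ f m := by
    intro i
    simp only [gtrans, PiLp.toLp_apply, map_mul, map_sum, Complex.conj_conj, Complex.conj_ofReal]
    have e1 : ∀ n, f n * ((Real.sqrt N : ℂ) *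
          ∑ m, conj (gft χ g m) * χ m i * conj (χ m n))
        = ∑ m, (Real.sqrt N : ℂ) *
            (conj (gft χ g m) * χ m i * (f n * conj (χ m n))) := by
      intro n
      rw [Finset.mul_sum, Finset.mul_sum]
      exact Finset.sum_congr rfl fun m _ => by ring
    rw [Finset.sum_congr rfl fun n _ => e1 n, Finset.sum_comm, Finset.mul_sum]
    apply Finset.sum_congr rfl
    intro m _
    rw [← Finset.mul_sum]
    congr 1
    rw [← Finset.mul_sum]
    rfl
  have hb : ∀ i, (∑ n, gtrans χ i h n * conj (f₁ n))
      = (Real.sqrt N : ℂ) * ∑ m, gft χ h m * conj (χ m i) * conj (gft χ f₁ m) := by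
    intro i
    simp only [gtrans, PiLp.toLp_apply]
    have e1 : ∀ n, ((Real.sqrt N : ℂ) * ∑ m, gft χ h m * conj (χ m i) * χ m n) * conj (f₁ n)
        = ∑ m, (Real.sqrt N : ℂ) *
            (gft χ h m * conj (χ m i) * (conj (f₁ n) * χ m n)) := by
      intro n
      rw [Finset.mul_sum, Finset.sum_mul]
      exact Finset.sum_congr rfl fun m _ => by ring
    rw [Finset.sum_congr rfl fun n _ => e1 n, Finset.sum_comm, Finset.mul_sum]
    apply Finset.sum_congr rfl
    intro m _
    rw [← Finset.mul_sum]
    congr 1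
    rw [← Finset.mul_sum]
    congr 1
    rw [show conj (gft χ f₁ m) = ∑ n, conj (f₁ n) * χ m n by
      simp only [gft, PiLp.toLp_apply, map_sum, map_mul, Complex.conj_conj]]
  have main : ∀ i,
      (∑ n, f n * conj (gtrans χ i g n)) * (∑ n, gtrans χ i h n * conj (f₁ n))
      = ∑ m, ∑ m', (N : ℂ) *
          (conj (gft χ g m) * gft χ f m * (gft χ h m' * conj (gft χ f₁ m'))) *
          (χ m i * conj (χ m' i)) := by
    intro i
    rw [ha i, hb i, mul_mul_mul_comm, hsq, Finset.sum_mul_sum, Finset.mul_sum]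
    apply Finset.sum_congr rfl
    intro m _
    rw [Finset.mul_sum]
    exact Finset.sum_congr rfl fun m' _ => by ring
  rw [Finset.sum_congr rfl fun i _ => main i, Finset.sum_comm, Finset.mul_sum]
  apply Finset.sum_congr rfl
  intro m _
  rw [Finset.sum_comm]
  have step : ∀ m', (∑ i, (N : ℂ) *
        (conj (gft χ g m) * gft χ f m * (gft χ h m' * conj (gft χ f₁ m'))) *
        (χ m i * conj (χ m' i)))
      = (N : ℂ) *
        (conj (gft χ g m) * gft χ f m * (gft χ h m' * conj (gft χ f₁ m'))) *
        (if m = m' then 1 else 0) := fun m' => by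
    rw [← Finset.mul_sum, ortho2 χ hχ m m']
  rw [Finset.sum_congr rfl fun m' _ => step m']
  simp only [mul_ite, mul_one, mul_zero, Finset.sum_ite_eq, Finset.mem_univ, if_true]
  ring

end aux

/-- `{T_i g}` and `{T_i h}` are dual frames for `ℂ^N` iff `conj(ĝ(l))·ĥ(l) = 1/N`
for all `l`. -/
theorem translates_dual_frames_iff {N : ℕ} (hN : 0 < N)
    (χ : Fin N → EuclideanSpace ℂ (Fin N)) (hχ : Orthonormal ℂ χ)
    (hspan : Submodule.span ℂ (Set.range χ) = ⊤)
    (g h : EuclideanSpace ℂ (Fin N)) :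
    (∀ f f₁ : EuclideanSpace ℂ (Fin N),
        (∑ n, f n * conj (f₁ n)) =
          ∑ i : Fin N,
            (∑ n, f n * conj (gtrans χ i g n)) *
              (∑ n, gtrans χ i h n * conj (f₁ n))) ↔
    (∀ l : Fin N, conj (gft χ g l) * gft χ h l = 1 / N) := by
  have hN0 : (N : ℂ) ≠ 0 := Nat.cast_ne_zero.mpr hN.ne'
  constructor
  · intro H l
    have h1 := H (χ l) (χ l)
    rw [framesum χ hχ g h (χ l) (χ l), ortho2 χ hχ l l] at h1
    have hgl : ∀ m, gft χ (χ l) m = if l = m then 1 else 0 := fun m => by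
      simp only [gft, PiLp.toLp_apply]; exact ortho2 χ hχ l m
    have h2 : (∑ m, conj (gft χ g m) * gft χ h m * (gft χ (χ l) m * conj (gft χ (χ l) m)))
        = conj (gft χ g l) * gft χ h l := by
      have e : ∀ m, conj (gft χ g m) * gft χ h m * (gft χ (χ l) m * conj (gft χ (χ l) m))
          = if l = m then conj (gft χ g m) * gft χ h m else 0 := by
        intro m
        rw [hgl m]
        split <;> simp
      rw [Finset.sum_congr rfl fun m _ => e m, Finset.sum_ite_eq]
      simp
    rw [h2] at h1
    norm_num at h1
    rw [eq_div_iff hN0]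
    linear_combination -h1
  · intro H f f₁
    rw [framesum χ hχ g h f f₁, parseval χ hχ f f₁, Finset.mul_sum]
    apply Finset.sum_congr rfl
    intro m _
    rw [H m]
    field_simp
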